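/- For all real x ≥ 0 and y, with P₀ = (x(1−2x), y(1−2x), y√(8x)) and P₃ = (3x − x² − y², y, 0) in ℝ³, one has ‖P₀ − P₃‖ = 2x + x² + y². -/
import Mathlib


noncomputable def pt (a b c : ℝ) : EuclideanSpace ℝ (Fin 3) :=
  (WithLp.equiv 2 (Fin 3 → ℝ)).symm ![a, b, c]

theorem dist_P0_P3 (x y : ℝ) (hx : 0 ≤ x) :
    ‖pt (x * (1 - 2 * x)) (y * (1 - 2 * x)) (y * Real.sqrt (8 * x))
        - pt (3 * x - x ^ 2 - y ^ 2) y 0‖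
      = 2 * x + x ^ 2 + y ^ 2 := by
  have h8 : Real.sqrt (8 * x) ^ 2 = 8 * x := Real.sq_sqrt (by linarith)
  rw [EuclideanSpace.norm_eq]
  have : ∀ i, ‖(pt (x * (1 - 2 * x)) (y * (1 - 2 * x)) (y * Real.sqrt (8 * x))
        - pt (3 * x - x ^ 2 - y ^ 2) y 0) i‖ ^ 2
      = ![((x * (1 - 2 * x)) - (3 * x - x ^ 2 - y ^ 2)) ^ 2,
          (y * (1 - 2 * x) - y) ^ 2, (y * Real.sqrt (8 * x)) ^ 2] i := by
    intro i
    fin_cases i <;> simp [pt, Real.norm_eq_abs, mul_pow, sq_abs]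
  rw [Fin.sum_univ_three, this 0, this 1, this 2]
  simp only [Matrix.cons_val_zero, Matrix.cons_val_one, Matrix.head_cons,
    Matrix.cons_val_two, Matrix.tail_cons]
  have key : (x * (1 - 2 * x) - (3 * x - x ^ 2 - y ^ 2)) ^ 2
      + (y * (1 - 2 * x) - y) ^ 2 + (y * Real.sqrt (8 * x)) ^ 2
      = (2 * x + x ^ 2 + y ^ 2) ^ 2 := by
    have : (y * Real.sqrt (8 * x)) ^ 2 = y ^ 2 * (8 * x) := by
      rw [mul_pow, h8]
    rw [this]; ring
  rw [key]
  exact Real.sqrt_sq (by positivity)
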